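/- Assume the misclassified probability mass satisfies Σ_{t∈R̂∩G} P(t) + Σ_{t∈Ĝ∩R} P(t) ≤ ε₁ with 0 ≤ ε₁ < 1, and |δ − δ̂| ≤ ε₂ with ε₂ ≥ 0. Then max{ |e^{δ}/A − 1| , |e^{−δ̂}/A − 1| } ≤ f₂(ε₁, ε₂). -/
import Mathlib


open Finset

/-- Bound on the cross-list multiplicative deviation by `f₂(ε₁, ε₂)`. -/
theorem cross_list_deviation_bound
    {V : Type*} [Fintype V] [DecidableEq V]
    (P : V → ℝ) (G Ghat : Finset V) (δ δhat : ℝ)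
    (hP0 : ∀ t, 0 ≤ P t) (hP1 : ∑ t, P t = 1) (hδ : 0 < δ) (hδhat : 0 < δhat)
    (A : ℝ)
    (hA : A = ∑ t ∈ Ghatᶜ ∩ Gᶜ, P t + Real.exp δ * ∑ t ∈ Ghatᶜ ∩ G, P t
        + Real.exp (-δhat) * ∑ t ∈ Ghat ∩ Gᶜ, P t
        + Real.exp (δ - δhat) * ∑ t ∈ Ghat ∩ G, P t)
    (ε₁ ε₂ : ℝ) (hε₁0 : 0 ≤ ε₁) (hε₁1 : ε₁ < 1) (hε₂0 : 0 ≤ ε₂)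
    (hmis : ∑ t ∈ Ghatᶜ ∩ G, P t + ∑ t ∈ Ghat ∩ Gᶜ, P t ≤ ε₁)
    (hδδ : |δ - δhat| ≤ ε₂) :
    max |Real.exp δ / A - 1| |Real.exp (-δhat) / A - 1|
      ≤ max (Real.exp (δ + 2 * ε₂) / (1 - ε₁) - 1)
          (1 - Real.exp (-(δ + 2 * ε₂)) / ((1 - ε₁) + ε₁ * Real.exp (δ - ε₂))) := by
  set a := ∑ t ∈ Ghatᶜ ∩ Gᶜ, P t with ha_def
  set b := ∑ t ∈ Ghatᶜ ∩ G, P t with hb_def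
  set c := ∑ t ∈ Ghat ∩ Gᶜ, P t with hc_def
  set d := ∑ t ∈ Ghat ∩ G, P t with hd_def
  have ha0 : 0 ≤ a := Finset.sum_nonneg fun t _ => hP0 t
  have hb0 : 0 ≤ b := Finset.sum_nonneg fun t _ => hP0 t
  have hc0 : 0 ≤ c := Finset.sum_nonneg fun t _ => hP0 t
  have hd0 : 0 ≤ d := Finset.sum_nonneg fun t _ => hP0 t
  have hab : a + b = ∑ t ∈ Ghatᶜ, P t := by
    rw [ha_def, hb_def, ← Finset.sdiff_eq_inter_compl, add_comm,
      Finset.sum_inter_add_sum_sdiff]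
  have hcd : c + d = ∑ t ∈ Ghat, P t := by
    rw [hc_def, hd_def, ← Finset.sdiff_eq_inter_compl, add_comm,
      Finset.sum_inter_add_sum_sdiff]
  have hsum : a + b + c + d = 1 := by
    have := Finset.sum_compl_add_sum Ghat P
    rw [← hab, ← hcd] at this
    linarith
  obtain ⟨hdd1, hdd2⟩ := abs_le.mp hδδ
  have e1 : Real.exp (-ε₂) ≤ 1 := Real.exp_le_one_iff.mpr (by linarith)
  have h1ε : (0:ℝ) < 1 - ε₁ := by linarith
  -- lower bound on A : exp(-ε₂) * (1-ε₁) ≤ A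
  have hAlow : Real.exp (-ε₂) * (1 - ε₁) ≤ A := by
    have e2 : Real.exp (-ε₂) ≤ Real.exp (δ - δhat) := Real.exp_le_exp.mpr (by linarith)
    have h1 : Real.exp (-ε₂) * a ≤ 1 * a := mul_le_mul_of_nonneg_right e1 ha0
    have h2 : Real.exp (-ε₂) * d ≤ Real.exp (δ - δhat) * d :=
      mul_le_mul_of_nonneg_right e2 hd0
    have h3 : 0 ≤ Real.exp δ * b := mul_nonneg (Real.exp_pos δ).le hb0
    have h4 : 0 ≤ Real.exp (-δhat) * c := mul_nonneg (Real.exp_pos (-δhat)).le hc0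
    have h5 : 1 - ε₁ ≤ a + d := by linarith
    have h6 : Real.exp (-ε₂) * (1 - ε₁) ≤ Real.exp (-ε₂) * (a + d) :=
      mul_le_mul_of_nonneg_left h5 (Real.exp_pos (-ε₂)).le
    rw [hA]
    have hexp : Real.exp (-ε₂) * (a + d) = Real.exp (-ε₂) * a + Real.exp (-ε₂) * d := by
      ring
    linarith
  have hApos : 0 < A :=
    lt_of_lt_of_le (mul_pos (Real.exp_pos (-ε₂)) h1ε) hAlow
  have hD : (0:ℝ) < (1 - ε₁) + ε₁ * Real.exp (δ - ε₂) := by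
    have := mul_nonneg hε₁0 (Real.exp_pos (δ - ε₂)).le
    linarith
  -- upper bound : A * exp(δhat - δ - 2ε₂) ≤ (1-ε₁) + ε₁ * exp(δ-ε₂)
  have hAup : A * Real.exp (δhat - δ - 2 * ε₂) ≤ (1 - ε₁) + ε₁ * Real.exp (δ - ε₂) := by
    have ca : Real.exp (δhat - δ - 2 * ε₂) ≤ Real.exp (-ε₂) :=
      Real.exp_le_exp.mpr (by linarith)
    have cb : Real.exp δ * Real.exp (δhat - δ - 2 * ε₂) ≤ Real.exp (δ - ε₂) := by
      rw [← Real.exp_add]; exact Real.exp_le_exp.mpr (by linarith)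
    have cc : Real.exp (-δhat) * Real.exp (δhat - δ - 2 * ε₂) ≤ Real.exp (-ε₂) := by
      rw [← Real.exp_add]; exact Real.exp_le_exp.mpr (by linarith)
    have cd' : Real.exp (δ - δhat) * Real.exp (δhat - δ - 2 * ε₂) ≤ Real.exp (-ε₂) := by
      rw [← Real.exp_add]; exact Real.exp_le_exp.mpr (by linarith)
    have h1 : Real.exp (δhat - δ - 2 * ε₂) * a ≤ Real.exp (-ε₂) * a :=
      mul_le_mul_of_nonneg_right ca ha0
    have h2 : Real.exp δ * Real.exp (δhat - δ - 2 * ε₂) * b ≤ Real.exp (δ - ε₂) * b :=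
      mul_le_mul_of_nonneg_right cb hb0
    have h3 : Real.exp (-δhat) * Real.exp (δhat - δ - 2 * ε₂) * c ≤ Real.exp (-ε₂) * c :=
      mul_le_mul_of_nonneg_right cc hc0
    have h4 : Real.exp (δ - δhat) * Real.exp (δhat - δ - 2 * ε₂) * d
        ≤ Real.exp (-ε₂) * d := mul_le_mul_of_nonneg_right cd' hd0
    have expand : A * Real.exp (δhat - δ - 2 * ε₂)
        = Real.exp (δhat - δ - 2 * ε₂) * a
          + Real.exp δ * Real.exp (δhat - δ - 2 * ε₂) * b
          + Real.exp (-δhat) * Real.exp (δhat - δ - 2 * ε₂) * c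
          + Real.exp (δ - δhat) * Real.exp (δhat - δ - 2 * ε₂) * d := by
      rw [hA]; ring
    have hbε : b ≤ ε₁ := by linarith
    have hee : Real.exp (-ε₂) ≤ Real.exp (δ - ε₂) := Real.exp_le_exp.mpr (by linarith)
    have t1 : 0 ≤ (ε₁ - b) * (Real.exp (δ - ε₂) - Real.exp (-ε₂)) :=
      mul_nonneg (by linarith) (by linarith)
    have t2 : 0 ≤ (1 - ε₁) * (1 - Real.exp (-ε₂)) :=
      mul_nonneg (by linarith) (by linarith)
    have hacd : a + c + d = 1 - b := by linarith
    nlinarith [t1, t2]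
  -- Upper deviation bounds
  have R1 : Real.exp δ / A - 1 ≤ Real.exp (δ + 2 * ε₂) / (1 - ε₁) - 1 := by
    rw [sub_le_sub_iff_right, div_le_div_iff₀ hApos h1ε]
    have hid : Real.exp (δ + 2 * ε₂) * Real.exp (-ε₂) = Real.exp (δ + ε₂) := by
      rw [← Real.exp_add]; ring_nf
    have m1 := mul_le_mul_of_nonneg_left hAlow (Real.exp_pos (δ + 2 * ε₂)).le
    rw [← mul_assoc, hid] at m1
    have m2 : Real.exp δ * (1 - ε₁) ≤ Real.exp (δ + ε₂) * (1 - ε₁) :=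
      mul_le_mul_of_nonneg_right (Real.exp_le_exp.mpr (by linarith)) h1ε.le
    linarith
  have hexps : Real.exp (-δhat) ≤ Real.exp δ := Real.exp_le_exp.mpr (by linarith)
  have hdiv : Real.exp (-δhat) / A ≤ Real.exp δ / A :=
    (div_le_div_iff_of_pos_right hApos).mpr hexps
  have R1' : Real.exp (-δhat) / A - 1 ≤ Real.exp (δ + 2 * ε₂) / (1 - ε₁) - 1 := by
    linarith
  -- Lower deviation bounds
  have R2' : 1 - Real.exp (-δhat) / A
      ≤ 1 - Real.exp (-(δ + 2 * ε₂)) / ((1 - ε₁) + ε₁ * Real.exp (δ - ε₂)) := by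
    rw [sub_le_sub_iff_left, div_le_div_iff₀ hD hApos]
    have hid : Real.exp (δhat - δ - 2 * ε₂) * Real.exp (-δhat)
        = Real.exp (-(δ + 2 * ε₂)) := by
      rw [← Real.exp_add]; ring_nf
    have m1 := mul_le_mul_of_nonneg_right hAup (Real.exp_pos (-δhat)).le
    rw [mul_assoc, hid] at m1
    linarith
  have R2 : 1 - Real.exp δ / A
      ≤ 1 - Real.exp (-(δ + 2 * ε₂)) / ((1 - ε₁) + ε₁ * Real.exp (δ - ε₂)) := by
    linarith
  have hm1 := le_max_left (Real.exp (δ + 2 * ε₂) / (1 - ε₁) - 1)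
      (1 - Real.exp (-(δ + 2 * ε₂)) / ((1 - ε₁) + ε₁ * Real.exp (δ - ε₂)))
  have hm2 := le_max_right (Real.exp (δ + 2 * ε₂) / (1 - ε₁) - 1)
      (1 - Real.exp (-(δ + 2 * ε₂)) / ((1 - ε₁) + ε₁ * Real.exp (δ - ε₂)))
  apply max_le
  · exact abs_le.mpr ⟨by linarith, by linarith⟩
  · exact abs_le.mpr ⟨by linarith, by linarith⟩
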